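/- arXiv:2408.10875 — 2 statements merged into one kernel-verified Lean document; each statement's English description precedes it below -/
import Mathlib

section
/- Let I be a standard dyadic n-partition of [0,1]. Then |S_L(I)| = n − 1 and |S_R(I)| = n. -/
/-- `IsSD l r` means `[l, r]` is a standard dyadic interval
`[k/2^m, (k+1)/2^m] ⊆ [0,1]` with `m ≥ 0`, `0 ≤ k ≤ 2^m - 1`. -/
def IsSD (l r : ℚ) : Prop :=
  ∃ m k : ℕ, k < 2 ^ m ∧ l = (k : ℚ) / 2 ^ m ∧ r = ((k : ℚ) + 1) / 2 ^ m

/-- A left standard dyadic interval: `[k/2^m, (k+1)/2^m]` with `m ≥ 1` and `k` even. -/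
def IsLeftSD (l r : ℚ) : Prop :=
  ∃ m k : ℕ, 1 ≤ m ∧ k < 2 ^ m ∧ Even k ∧
    l = (k : ℚ) / 2 ^ m ∧ r = ((k : ℚ) + 1) / 2 ^ m

/-- A right standard dyadic interval: `[k/2^m, (k+1)/2^m]` with `m ≥ 1` and `k` odd;
by convention `[0,1]` is also regarded as a right standard dyadic interval. -/
def IsRightSD (l r : ℚ) : Prop :=
  (l = 0 ∧ r = 1) ∨
    ∃ m k : ℕ, 1 ≤ m ∧ k < 2 ^ m ∧ Odd k ∧
      l = (k : ℚ) / 2 ^ m ∧ r = ((k : ℚ) + 1) / 2 ^ m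

/-- The set `S` of all standard dyadic intervals, an interval `[l, r]` being
represented by the pair `(l, r)` of its endpoints. -/
def SDSet : Set (ℚ × ℚ) := {A | IsSD A.1 A.2}

/-- The conjugate `Ā` of a standard dyadic interval `A ≠ [0,1]`:
the adjacent standard dyadic interval of the same length, on the right of `A`
if `A` is left, and on the left of `A` if `A` is right. -/
noncomputable def conjSD (A : ℚ × ℚ) : ℚ × ℚ := by
  classical
  exact if IsLeftSD A.1 A.2 then (A.2, 2 * A.2 - A.1) else (2 * A.1 - A.2, A.1)

/-- The union of two overlapping or adjacent closed intervals, as an interval: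
from the smaller left endpoint to the larger right endpoint.  In particular
`sdJoin A (conjSD A)` represents the interval `A ∪ Ā`. -/
def sdJoin (A B : ℚ × ℚ) : ℚ × ℚ := (min A.1 B.1, max A.2 B.2)

/-- A standard dyadic `n`-partition of `[0,1]`: breakpoints
`0 = a_0 < a_1 < ... < a_n = 1` with every `[a_i, a_{i+1}]` a standard dyadic
interval. -/
structure SDPartition (n : ℕ) where
  pts : Fin (n + 1) → ℚ
  first : pts 0 = 0
  last : pts (Fin.last n) = 1
  mono : StrictMono pts
  sd : ∀ i : Fin n, IsSD (pts i.castSucc) (pts i.succ)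

/-- `S(I)`: the set of intervals `[a_i, a_j]` (`i < j`) with endpoints breakpoints
of `I` that are standard dyadic intervals. -/
def SIn {n : ℕ} (I : SDPartition n) : Set (ℚ × ℚ) :=
  {A | (∃ i j : Fin (n + 1), i < j ∧ A = (I.pts i, I.pts j)) ∧ IsSD A.1 A.2}

/-- The midpoint of an interval. -/
def midQ (A : ℚ × ℚ) : ℚ := (A.1 + A.2) / 2

/-- The length of an interval. -/
def lenQ (A : ℚ × ℚ) : ℚ := A.2 - A.1

/-- `E`: the set of dyadic rationals strictly between 0 and 1. -/
def Edyadic : Set ℚ := {q | ∃ m k : ℕ, 1 ≤ k ∧ k < 2 ^ m ∧ q = (k : ℚ) / 2 ^ m}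

/-- `S_L(I) = S(I) ∩ S_L`. -/
def SLIn {n : ℕ} (I : SDPartition n) : Set (ℚ × ℚ) := {A ∈ SIn I | IsLeftSD A.1 A.2}

/-- `S_R(I) = S(I) ∩ S_R`. -/
def SRIn {n : ℕ} (I : SDPartition n) : Set (ℚ × ℚ) := {A ∈ SIn I | IsRightSD A.1 A.2}

/-- `M(I)`: the set of midpoints of the subintervals of `I`. -/
def MIn {n : ℕ} (I : SDPartition n) : Set ℚ :=
  {q | ∃ i : Fin n, q = midQ (I.pts i.castSucc, I.pts i.succ)}

/-- `E(I)`: the union of `M(I)` with the breakpoints of `I` other than 0 and 1. -/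
def EIn {n : ℕ} (I : SDPartition n) : Set ℚ :=
  MIn I ∪ {q | (∃ i : Fin (n + 1), I.pts i = q) ∧ q ≠ 0 ∧ q ≠ 1}

section AuxStatement3

lemma qpow_pos (m : ℕ) : (0:ℚ) < 2 ^ m := by positivity

lemma div_pow_eq_iff {a b p q : ℕ} : (a:ℚ)/2^p = (b:ℚ)/2^q ↔ a * 2^q = b * 2^p := by
  rw [div_eq_div_iff (qpow_pos p).ne' (qpow_pos q).ne']
  constructor
  · intro h; exact_mod_cast h
  · intro h; exact_mod_cast h

lemma div_pow_lt_iff {a b p q : ℕ} : (a:ℚ)/2^p < (b:ℚ)/2^q ↔ a * 2^q < b * 2^p := by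
  rw [div_lt_div_iff₀ (qpow_pos p) (qpow_pos q)]
  constructor
  · intro h; exact_mod_cast h
  · intro h; exact_mod_cast h

lemma div_pow_le_iff {a b p q : ℕ} : (a:ℚ)/2^p ≤ (b:ℚ)/2^q ↔ a * 2^q ≤ b * 2^p := by
  rw [div_le_div_iff₀ (qpow_pos p) (qpow_pos q)]
  constructor
  · intro h; exact_mod_cast h
  · intro h; exact_mod_cast h

/-- core nesting step for `m ≤ m'` -/
lemma sd_nested_core {m d k k' : ℕ}
    (h1 : (k':ℚ)/2^(m+d) < ((k:ℚ)+1)/2^m) (h2 : (k:ℚ)/2^m < ((k':ℚ)+1)/2^(m+d)) :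
    (k:ℚ)/2^m ≤ (k':ℚ)/2^(m+d) ∧ ((k':ℚ)+1)/2^(m+d) ≤ ((k:ℚ)+1)/2^m := by
  have c1 : ((k:ℚ)+1) = ((k+1:ℕ):ℚ) := by push_cast; ring
  have c2 : ((k':ℚ)+1) = ((k'+1:ℕ):ℚ) := by push_cast; ring
  rw [c1, div_pow_lt_iff] at h1
  rw [c2, div_pow_lt_iff] at h2
  rw [div_pow_le_iff]
  rw [c2, c1, div_pow_le_iff]
  -- h1 : k' * 2^m < (k+1) * 2^(m+d),  h2 : k * 2^(m+d) < (k'+1) * 2^m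
  -- goals : k * 2^(m+d) ≤ k' * 2^m  ∧  (k'+1) * 2^m ≤ (k+1) * 2^(m+d)
  have e : (2:ℕ)^(m+d) = 2^d * 2^m := by rw [pow_add]; ring
  rw [e] at h1 h2 ⊢
  have hp : 0 < 2^m := pow_pos two_pos m
  constructor
  · have : k * 2^d < k' + 1 := by
      have := h2
      rw [← mul_assoc] at this
      exact lt_of_mul_lt_mul_right (by simpa [add_mul] using this) (le_of_lt hp)
    calc k * (2^d * 2^m) = (k * 2^d) * 2^m := by ring
    _ ≤ k' * 2^m := Nat.mul_le_mul_right _ (by omega)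
  · have : k' < (k+1) * 2^d := by
      have := h1
      rw [show (k+1) * (2^d * 2^m) = ((k+1) * 2^d) * 2^m by ring] at this
      exact lt_of_mul_lt_mul_right this (le_of_lt hp)
    calc (k'+1) * 2^m ≤ ((k+1) * 2^d) * 2^m := Nat.mul_le_mul_right _ (by omega)
    _ = (k+1) * (2^d * 2^m) := by ring

lemma sd_nested {l r l' r' : ℚ} (h1 : IsSD l r) (h2 : IsSD l' r')
    (ho1 : l < r') (ho2 : l' < r) :
    (l ≤ l' ∧ r' ≤ r) ∨ (l' ≤ l ∧ r ≤ r') := by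
  obtain ⟨m, k, hk, rfl, rfl⟩ := h1
  obtain ⟨m', k', hk', rfl, rfl⟩ := h2
  rcases le_total m m' with hle | hle
  · obtain ⟨d, rfl⟩ := Nat.exists_eq_add_of_le hle
    exact Or.inl (sd_nested_core ho2 ho1)
  · obtain ⟨d, rfl⟩ := Nat.exists_eq_add_of_le hle
    exact Or.inr (sd_nested_core ho1 ho2)

lemma odd_mul_pow_eq {c c' d : ℕ} (hc' : Odd c') (h : c * 2 ^ d = c') : d = 0 := by
  by_contra hd
  have : Even c' := by
    rw [← h]
    exact (Nat.even_pow.mpr ⟨even_two, hd⟩).mul_left c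
  exact (Nat.not_even_iff_odd.mpr hc') this

lemma odd_div_pow_inj {m m' c c' : ℕ} (hc : Odd c) (hc' : Odd c')
    (h : (c:ℚ)/2^m = (c':ℚ)/2^m') : m = m' ∧ c = c' := by
  rw [div_pow_eq_iff] at h
  rcases le_total m m' with hle | hle
  · obtain ⟨d, rfl⟩ := Nat.exists_eq_add_of_le hle
    rw [pow_add, ← mul_assoc, mul_right_comm] at h
    have h2 : c * 2 ^ d = c' := by
      have := Nat.eq_of_mul_eq_mul_right (pow_pos two_pos m) h
      linarith [this]
    have := odd_mul_pow_eq hc' h2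
    subst this; simp at h2 ⊢; omega
  · obtain ⟨d, rfl⟩ := Nat.exists_eq_add_of_le hle
    rw [pow_add, ← mul_assoc, mul_right_comm] at h
    have h2 : c' * 2 ^ d = c := by
      have := Nat.eq_of_mul_eq_mul_right (pow_pos two_pos m') h.symm
      linarith [this]
    have := odd_mul_pow_eq hc h2
    subst this; simp at h2 ⊢; omega

lemma key_left {n : ℕ} (I : SDPartition n) {i : Fin (n+1)} {c m : ℕ}
    (hc : Odd c) (hlt : c < 2^m) (hv : I.pts i = (c:ℚ)/2^m) :
    ∃ j : Fin (n+1), I.pts j = ((c-1:ℕ):ℚ)/2^m := by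
  have hc1 : 1 ≤ c := hc.pos
  set u : ℚ := ((c-1:ℕ):ℚ)/2^m with hu
  set v : ℚ := (c:ℚ)/2^m with hvv
  have huv : u < v := by
    rw [hu, hvv, div_pow_lt_iff]
    exact Nat.mul_lt_mul_right (pow_pos two_pos m) |>.mpr (by omega)
  have hu0 : (0:ℚ) ≤ u := by rw [hu]; positivity
  set T : Finset (Fin (n+1)) := Finset.univ.filter (fun j => I.pts j ≤ u) with hT
  have hT0 : (0 : Fin (n+1)) ∈ T := by
    simp only [hT, Finset.mem_filter, Finset.mem_univ, true_and, I.first]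
    exact hu0
  set j : Fin (n+1) := T.max' ⟨0, hT0⟩ with hjdef
  have hj : I.pts j ≤ u := (Finset.mem_filter.mp (T.max'_mem ⟨0, hT0⟩)).2
  have hji : j < i := by
    have : I.pts j < I.pts i := lt_of_le_of_lt hj (hv ▸ huv)
    exact I.mono.lt_iff_lt.mp this
  have hjn : (j : ℕ) < n := by
    have h1 := (Fin.lt_def.mp hji)
    have h2 := i.isLt
    omega
  set j' : Fin n := ⟨(j:ℕ), hjn⟩ with hj'def
  have hcs : j'.castSucc = j := Fin.ext rfl
  have hsuccj : j < j'.succ := by rw [Fin.lt_def]; simp [hj'def]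
  have h1 : u < I.pts j'.succ := by
    by_contra hle
    push_neg at hle
    have hmem : j'.succ ∈ T := by
      simp only [hT, Finset.mem_filter, Finset.mem_univ, true_and]; exact hle
    exact absurd (T.le_max' _ hmem) (not_le.mpr hsuccj)
  have hsi : j'.succ ≤ i := by
    rw [Fin.le_def]; rw [Fin.lt_def] at hji; simp [hj'def]; omega
  have h2 : I.pts j'.succ ≤ v := hv ▸ I.mono.monotone hsi
  have hK := I.sd j'
  rw [hcs] at hK
  have hcast : ((c-1:ℕ):ℚ) + 1 = (c:ℚ) := by
    rw [Nat.cast_sub hc1]; push_cast; ring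
  have hJ : IsSD u v := ⟨m, c-1, by omega, rfl, by rw [hvv, hcast]⟩
  rcases sd_nested hK hJ (lt_of_le_of_lt hj huv) h1 with ⟨hKl, hKr⟩ | ⟨hul, _⟩
  · -- J ⊆ K : then K ends exactly at v and has the same length
    have hve : I.pts j'.succ = v := le_antisymm h2 hKr
    obtain ⟨p, k, hkp, hKl', hKr'⟩ := hK
    have hkc : ((k:ℚ)+1) = ((k+1:ℕ):ℚ) := by push_cast; ring
    have heq : (k+1) * 2^m = c * 2^p := by
      rw [← div_pow_eq_iff, ← hkc, ← hKr', hve]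
    have hineq : k * 2^m ≤ (c-1) * 2^p := by
      rw [← div_pow_le_iff, ← hKl']
      exact le_trans hKl (le_refl u)
    obtain ⟨c', rfl⟩ : ∃ c', c = c' + 1 := ⟨c-1, by omega⟩
    have e1 : (k+1)*2^m = k*2^m + 2^m := by ring
    have e2 : (c'+1)*2^p = c'*2^p + 2^p := by ring
    have e3 : (c'+1) - 1 = c' := by omega
    rw [e3] at hineq
    have hpow : (2:ℕ)^p ≤ 2^m := by
      rw [e1, e2] at heq; omega
    have hpm : p ≤ m := (Nat.pow_le_pow_iff_right (by norm_num)).mp hpow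
    obtain ⟨d, rfl⟩ := Nat.exists_eq_add_of_le hpm
    have heq2 : (k+1) * 2^d = c' + 1 := by
      have : ((k+1) * 2^d) * 2^p = (c'+1) * 2^p := by
        rw [pow_add] at heq; ring_nf at heq ⊢; linarith [heq]
      exact Nat.eq_of_mul_eq_mul_right (pow_pos two_pos p) this
    have hd0 : d = 0 := odd_mul_pow_eq hc heq2
    subst hd0
    simp only [pow_zero, mul_one] at heq2
    have hk : k = c' := by omega
    subst hk
    exact ⟨j, by rw [hKl', hu]; simp⟩
  · exact ⟨j, le_antisymm hj hul⟩


lemma key_right {n : ℕ} (I : SDPartition n) {i : Fin (n+1)} {c m : ℕ}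
    (hc : Odd c) (hlt : c < 2^m) (hv : I.pts i = (c:ℚ)/2^m) :
    ∃ j : Fin (n+1), I.pts j = ((c+1:ℕ):ℚ)/2^m := by
  set p : ℚ := (c:ℚ)/2^m with hp
  set w : ℚ := ((c+1:ℕ):ℚ)/2^m with hw
  have hpw : p < w := by
    rw [hp, hw, show (c:ℚ) = ((c:ℕ):ℚ) from rfl, div_pow_lt_iff]
    exact Nat.mul_lt_mul_right (pow_pos two_pos m) |>.mpr (by omega)
  have hw1 : w ≤ 1 := by
    rw [hw, div_le_one (qpow_pos m)]
    exact_mod_cast hlt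
  set T : Finset (Fin (n+1)) := Finset.univ.filter (fun j => w ≤ I.pts j) with hT
  have hTl : Fin.last n ∈ T := by
    simp only [hT, Finset.mem_filter, Finset.mem_univ, true_and, I.last]
    exact hw1
  set j : Fin (n+1) := T.min' ⟨_, hTl⟩ with hjdef
  have hj : w ≤ I.pts j := (Finset.mem_filter.mp (T.min'_mem ⟨_, hTl⟩)).2
  have hij : i < j := by
    have : I.pts i < I.pts j := lt_of_lt_of_le (hv ▸ hpw) hj
    exact I.mono.lt_iff_lt.mp this
  have hj1 : 1 ≤ (j : ℕ) := by
    rw [Fin.lt_def] at hij; omega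
  have hjn : (j : ℕ) - 1 < n := by
    have := j.isLt; omega
  set j' : Fin n := ⟨(j:ℕ) - 1, hjn⟩ with hj'def
  have hsucc : j'.succ = j := by
    apply Fin.ext; simp [hj'def]; omega
  have hcsj : j'.castSucc < j := by
    rw [Fin.lt_def]; show (j:ℕ) - 1 < (j:ℕ); omega
  have h1 : I.pts j'.castSucc < w := by
    by_contra hle
    push_neg at hle
    have hmem : j'.castSucc ∈ T := by
      simp only [hT, Finset.mem_filter, Finset.mem_univ, true_and]; exact hle
    exact absurd (T.min'_le _ hmem) (not_le.mpr hcsj)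
  have hics : i ≤ j'.castSucc := by
    rw [Fin.le_def]; rw [Fin.lt_def] at hij; simp [hj'def]; omega
  have h2 : p ≤ I.pts j'.castSucc := hv ▸ I.mono.monotone hics
  have hK := I.sd j'
  rw [hsucc] at hK
  have hcast : (c:ℚ) + 1 = ((c+1:ℕ):ℚ) := by push_cast; ring
  have hJ : IsSD p w := ⟨m, c, hlt, rfl, by rw [hw, hcast]⟩
  have ho2 : p < I.pts j := lt_of_lt_of_le hpw hj
  rcases sd_nested hK hJ h1 ho2 with ⟨hKl, hKr⟩ | ⟨hwl, hKr2⟩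
  · -- J ⊆ K
    have hpe : I.pts j'.castSucc = p := le_antisymm hKl h2
    obtain ⟨q, k, hkq, hKl', hKr'⟩ := hK
    have heq : k * 2^m = c * 2^q := by
      rw [← div_pow_eq_iff, ← hKl', hpe, hp]
    have hineq : (c+1) * 2^q ≤ (k+1) * 2^m := by
      rw [← div_pow_le_iff, ← hw]
      calc w ≤ I.pts j := hj
        _ = ((k:ℚ)+1)/2^q := hKr'
        _ = ((k+1:ℕ):ℚ)/2^q := by push_cast; ring
    have e1 : (c+1)*2^q = c*2^q + 2^q := by ring
    have e2 : (k+1)*2^m = k*2^m + 2^m := by ring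
    rw [e1, e2] at hineq
    have hpow : (2:ℕ)^q ≤ 2^m := by omega
    have hqm : q ≤ m := (Nat.pow_le_pow_iff_right (by norm_num)).mp hpow
    obtain ⟨d, rfl⟩ := Nat.exists_eq_add_of_le hqm
    have heq2 : k * 2^d = c := by
      have h3 : (k * 2^d) * 2^q = c * 2^q := by
        rw [pow_add] at heq; ring_nf at heq ⊢; linarith [heq]
      exact Nat.eq_of_mul_eq_mul_right (pow_pos two_pos q) h3
    have hd0 : d = 0 := odd_mul_pow_eq hc heq2
    subst hd0
    simp only [pow_zero, mul_one] at heq2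
    subst heq2
    exact ⟨j, by rw [hKr', hw]; push_cast; ring_nf⟩
  · exact ⟨j, le_antisymm hKr2 hj⟩

lemma breakpoint_rep {n : ℕ} (I : SDPartition n) (i : Fin (n+1))
    (h0 : I.pts i ≠ 0) (h1 : I.pts i ≠ 1) :
    ∃ m c : ℕ, 1 ≤ m ∧ Odd c ∧ c < 2^m ∧ I.pts i = (c:ℚ)/2^m := by
  have hin : (i:ℕ) < n := by
    have hlt := i.isLt
    rcases Nat.lt_or_ge (i:ℕ) n with h | h
    · exact h
    · exfalso
      have : i = Fin.last n := Fin.ext (by simp [Fin.last]; omega)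
      exact h1 (this ▸ I.last)
  set i' : Fin n := ⟨(i:ℕ), hin⟩ with hi'
  have hcs : i'.castSucc = i := Fin.ext rfl
  obtain ⟨p, k, hkp, hl, -⟩ := I.sd i'
  rw [hcs] at hl
  have hk0 : k ≠ 0 := by
    intro h
    subst h
    simp at hl
    exact h0 hl
  obtain ⟨t, c, hc2, hkeq⟩ := Nat.exists_eq_pow_mul_and_not_dvd hk0 2 (by norm_num)
  have hcodd : Odd c := Nat.odd_iff.mpr (Nat.two_dvd_ne_zero.mp hc2)
  have hc1 : 1 ≤ c := hcodd.pos
  have htp : t < p := by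
    have h2 : 2^t ≤ k := by rw [hkeq]; exact Nat.le_mul_of_pos_right _ hc1
    exact (Nat.pow_lt_pow_iff_right (by norm_num)).mp (lt_of_le_of_lt h2 hkp)
  obtain ⟨d, rfl⟩ : ∃ d, p = t + d := ⟨p - t, by omega⟩
  have hd1 : 1 ≤ d := by omega
  have hcd : c < 2^d := by
    have h3 : 2^t * c < 2^t * 2^d := by
      rw [← pow_add, ← hkeq]; exact hkp
    exact Nat.lt_of_mul_lt_mul_left h3
  refine ⟨d, c, hd1, hcodd, hcd, ?_⟩
  rw [hl, hkeq, div_pow_eq_iff, pow_add]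
  ring

end AuxStatement3

/-- for a standard dyadic `n`-partition `I`, `|S_L(I)| = n - 1`
and `|S_R(I)| = n`. -/
theorem statement_3 {n : ℕ} (I : SDPartition n) :
    (SLIn I).ncard = n - 1 ∧ (SRIn I).ncard = n := by
  classical
  have hn : 1 ≤ n := by
    by_contra h
    have hn0 : n = 0 := by omega
    subst hn0
    have h1 := I.last
    rw [show Fin.last 0 = 0 from rfl, I.first] at h1
    norm_num at h1
  have hne0 : ∀ {j : Fin (n+1)}, j ≠ 0 → I.pts j ≠ 0 :=
    fun hj h => hj (I.mono.injective (h.trans I.first.symm))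
  have hne1 : ∀ {j : Fin (n+1)}, j ≠ Fin.last n → I.pts j ≠ 1 :=
    fun hj h => hj (I.mono.injective (h.trans I.last.symm))
  set S0 : Set (Fin (n+1)) := {j | j ≠ 0 ∧ j ≠ Fin.last n} with hS0
  set B : Set ℚ := I.pts '' S0 with hB
  have h0last : (0 : Fin (n+1)) ≠ Fin.last n := by
    intro h
    have := congrArg Fin.val h
    simp [Fin.last] at this
    omega
  have hBS : B.ncard = n - 1 := by
    rw [hB, Set.ncard_image_of_injective _ I.mono.injective]
    have hset : S0 = (Set.univ : Set (Fin (n+1))) \ {0, Fin.last n} := by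
      ext j; simp [hS0]
    rw [hset, Set.ncard_diff (Set.subset_univ _), Set.ncard_univ, Set.ncard_pair h0last]
    simp [Nat.card_eq_fintype_card]
  -- LEFT
  have hinjL : Set.InjOn Prod.snd (SLIn I) := by
    rintro A ⟨-, m, k, hm, hk, hke, hA1, hA2⟩ A' ⟨-, m', k', hm', hk', hke', hA1', hA2'⟩ hsnd
    have hcst : ((k+1:ℕ):ℚ)/2^m = ((k'+1:ℕ):ℚ)/2^m' := by
      push_cast
      rw [← hA2, ← hA2', hsnd]
    obtain ⟨hmm, hkk⟩ := odd_div_pow_inj hke.add_one hke'.add_one hcst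
    have hkk' : k = k' := by omega
    subst hmm; subst hkk'
    exact Prod.ext (by rw [hA1, hA1']) hsnd
  have himgL : Prod.snd '' SLIn I = B := by
    apply Set.Subset.antisymm
    · rintro q ⟨A, ⟨⟨⟨i, j, hij, rfl⟩, -⟩, m, k, hm, hk, hke, hA1, hA2⟩, rfl⟩
      simp only at hA1 hA2
      refine ⟨j, ⟨?_, ?_⟩, rfl⟩
      · intro h
        subst h
        rw [I.first] at hA2
        have hpos : (0:ℚ) < ((k:ℚ)+1)/2^m := by positivity
        rw [← hA2] at hpos
        exact lt_irrefl _ hpos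
      · intro h
        subst h
        rw [I.last] at hA2
        have hk1 : k + 1 < 2^m := by
          have he : Even (2^m) := (Nat.even_pow).mpr ⟨even_two, by omega⟩
          have hne : k + 1 ≠ 2^m := by
            intro hcon
            have : Even (k+1) := hcon ▸ he
            exact (Nat.even_add_one.mp this) hke
          omega
        have hlt1 : ((k:ℚ)+1)/2^m < 1 := by
          rw [div_lt_one (qpow_pos m)]
          exact_mod_cast hk1
        rw [← hA2] at hlt1
        exact lt_irrefl _ hlt1
    · rintro q ⟨j, ⟨hj0, hjl⟩, rfl⟩
      obtain ⟨m, c, hm, hcodd, hclt, hrep⟩ := breakpoint_rep I j (hne0 hj0) (hne1 hjl)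
      obtain ⟨j', hj'⟩ := key_left I hcodd hclt hrep
      have hc1 : 1 ≤ c := hcodd.pos
      have hcast : ((c-1:ℕ):ℚ) + 1 = (c:ℚ) := by
        rw [Nat.cast_sub hc1]; push_cast; ring
      have hlt' : j' < j := by
        apply I.mono.lt_iff_lt.mp
        rw [hj', hrep, div_pow_lt_iff]
        exact Nat.mul_lt_mul_right (pow_pos two_pos m) |>.mpr (by omega)
      refine ⟨(((c-1:ℕ):ℚ)/2^m, I.pts j), ⟨⟨⟨j', j, hlt', ?_⟩, ?_⟩, ?_⟩, rfl⟩
      · rw [hj']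
      · exact ⟨m, c-1, by omega, rfl, by rw [hrep, hcast]⟩
      · exact ⟨m, c-1, hm, by omega, Nat.Odd.sub_odd hcodd odd_one, rfl,
          by rw [hrep, hcast]⟩
  -- RIGHT
  have hinjR : Set.InjOn Prod.fst (SRIn I) := by
    rintro A ⟨-, hA⟩ A' ⟨-, hA'⟩ hfst
    have hzero : ∀ {m k : ℕ}, Odd k → (0:ℚ) < (k:ℚ)/2^m := by
      intro m k hk
      have : (0:ℕ) * 2^m < k * 2^0 := by simpa using hk.pos
      have := div_pow_lt_iff.mpr this
      simpa using this
    rcases hA with ⟨h1, h2⟩ | ⟨m, k, hm, hk, hko, hA1, hA2⟩ <;>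
      rcases hA' with ⟨h1', h2'⟩ | ⟨m', k', hm', hk', hko', hA1', hA2'⟩
    · exact Prod.ext (by rw [h1, h1']) (by rw [h2, h2'])
    · exfalso
      rw [hA1'] at hfst
      have := hzero (m := m') hko'
      rw [← hfst, h1] at this
      exact lt_irrefl _ this
    · exfalso
      rw [hA1] at hfst
      have := hzero (m := m) hko
      rw [hfst, h1'] at this
      exact lt_irrefl _ this
    · have hcst : (k:ℚ)/2^m = (k':ℚ)/2^m' := by rw [← hA1, ← hA1', hfst]
      obtain ⟨hmm, hkk⟩ := odd_div_pow_inj hko hko' hcst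
      subst hmm; subst hkk
      exact Prod.ext hfst (by rw [hA2, hA2'])
  have h01mem : ((0:ℚ), (1:ℚ)) ∈ SRIn I := by
    refine ⟨⟨⟨0, Fin.last n, ?_, ?_⟩, ⟨0, 0, by norm_num, by norm_num, by norm_num⟩⟩,
      Or.inl ⟨rfl, rfl⟩⟩
    · rw [Fin.lt_def]; simp [Fin.last]; omega
    · rw [I.first, I.last]
  have himgR : Prod.fst '' SRIn I = insert 0 B := by
    apply Set.Subset.antisymm
    · rintro q ⟨A, ⟨⟨⟨i, j, hij, rfl⟩, -⟩, hA⟩, rfl⟩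
      rcases hA with ⟨h1, -⟩ | ⟨m, k, hm, hk, hko, hA1, hA2⟩
      · exact Or.inl h1
      · simp only at hA1 hA2
        refine Or.inr ⟨i, ⟨?_, ?_⟩, rfl⟩
        · intro h
          subst h
          rw [I.first] at hA1
          have hpos : (0:ℚ) < (k:ℚ)/2^m :=
            div_pos (by exact_mod_cast hko.pos) (qpow_pos m)
          rw [← hA1] at hpos
          exact lt_irrefl _ hpos
        · intro h
          subst h
          rw [I.last] at hA1
          have hlt1 : (k:ℚ)/2^m < 1 := by
            rw [div_lt_one (qpow_pos m)]
            exact_mod_cast hk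
          rw [← hA1] at hlt1
          exact lt_irrefl _ hlt1
    · rintro q (rfl | ⟨j, ⟨hj0, hjl⟩, rfl⟩)
      · exact ⟨((0:ℚ), (1:ℚ)), h01mem, rfl⟩
      · obtain ⟨m, c, hm, hcodd, hclt, hrep⟩ := breakpoint_rep I j (hne0 hj0) (hne1 hjl)
        obtain ⟨j', hj'⟩ := key_right I hcodd hclt hrep
        have hlt' : j < j' := by
          apply I.mono.lt_iff_lt.mp
          rw [hj', hrep, div_pow_lt_iff]
          exact Nat.mul_lt_mul_right (pow_pos two_pos m) |>.mpr (by omega)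
        have hcast : ((c+1:ℕ):ℚ) = (c:ℚ) + 1 := by push_cast; ring
        refine ⟨(I.pts j, I.pts j'), ⟨⟨⟨j, j', hlt', rfl⟩, ?_⟩, ?_⟩, rfl⟩
        · exact ⟨m, c, hclt, hrep, by rw [hj', hcast]⟩
        · exact Or.inr ⟨m, c, hm, hclt, hcodd, hrep, by rw [hj', hcast]⟩
  have h0B : (0:ℚ) ∉ B := by
    rintro ⟨j, ⟨hj0, -⟩, hq⟩
    exact hne0 hj0 hq
  have hBfin : B.Finite := (S0.toFinite).image _
  constructor
  · rw [← hBS, ← himgL, Set.ncard_image_of_injOn hinjL]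
  · rw [← Set.ncard_image_of_injOn hinjR, himgR,
      Set.ncard_insert_of_notMem h0B hBfin, hBS]
    omega
end

section
/- Let I be a standard dyadic n-partition of [0,1]. Then |S_+(I)| = n and |S_−(I)| = n − 1. -/
/-- `SignSpec s` says that `s` takes values in `{+1, -1}` on standard dyadic
intervals, `s([0,1]) = +1`, and for `A ≠ [0,1]`, `s A = s (A ∪ Ā)` if `A` is a
left interval while `s A = - s (A ∪ Ā)` if `A` is a right interval. -/
def SignSpec (s : ℚ × ℚ → ℤ) : Prop :=
  (∀ A ∈ SDSet, s A = 1 ∨ s A = -1) ∧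
  s ((0 : ℚ), (1 : ℚ)) = 1 ∧
  ∀ A ∈ SDSet, A ≠ ((0 : ℚ), (1 : ℚ)) →
    (IsLeftSD A.1 A.2 → s A = s (sdJoin A (conjSD A))) ∧
    (IsRightSD A.1 A.2 → s A = - s (sdJoin A (conjSD A)))

lemma dyadic_cross {k m k' m' : ℕ} (h : (k:ℚ)/2^m = (k':ℚ)/2^m') :
    k * 2^m' = k' * 2^m := by
  rw [div_eq_div_iff (by positivity) (by positivity)] at h
  exact_mod_cast h

lemma dyadic_odd {k m k' m' : ℕ} (hk : Odd k) (h : (k:ℚ)/2^m = (k':ℚ)/2^m') :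
    m ≤ m' ∧ k' = k * 2^(m'-m) := by
  have hc := dyadic_cross h
  have hm : m ≤ m' := by
    by_contra hmm
    push_neg at hmm
    have h1 : 2^m = 2^(m-m') * 2^m' := by rw [← pow_add]; congr 1; omega
    rw [h1, ← mul_assoc] at hc
    have h2 : k = k' * 2^(m-m') := Nat.eq_of_mul_eq_mul_right (by positivity) hc
    have h3 : 2^(m-m') = 2 * 2^(m-m'-1) := by rw [← pow_succ']; congr 1; omega
    have h4 : k % 2 = 1 := Nat.odd_iff.mp hk
    have h5 : 2 ∣ k := ⟨k' * 2^(m-m'-1), by rw [h2, h3]; ring⟩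
    omega
  refine ⟨hm, ?_⟩
  have h1 : 2^m' = 2^(m'-m) * 2^m := by rw [← pow_add]; congr 1; omega
  rw [h1, ← mul_assoc] at hc
  exact (Nat.eq_of_mul_eq_mul_right (by positivity) hc).symm

lemma exists_sibling {n : ℕ} (hn : 2 ≤ n) (I : SDPartition n) :
    ∃ (j m k : ℕ) (hj : j + 1 < n), 1 ≤ m ∧ 2*k+1 < 2^m ∧
      I.pts ⟨j, by omega⟩ = (2*k : ℚ)/2^m ∧
      I.pts ⟨j+1, by omega⟩ = (2*k+1 : ℚ)/2^m ∧
      I.pts ⟨j+2, by omega⟩ = (2*k+2 : ℚ)/2^m := by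
  choose M K hK hl hr using I.sd
  have hne : Nonempty (Fin n) := ⟨⟨0, by omega⟩⟩
  obtain ⟨i0, hi0⟩ := Finite.exists_max M
  set m := M i0 with hmdef
  set k := K i0 with hkdef
  have hm1 : 1 ≤ m := by
    by_contra h
    have hm0 : m = 0 := by omega
    have hk0 : k = 0 := by
      have h2 := hK i0
      rw [show M i0 = 0 by omega] at h2
      norm_num at h2
      omega
    have hl0 : I.pts i0.castSucc = 0 := by
      rw [hl i0, ← hkdef, ← hmdef, hm0, hk0]; norm_num
    have hr0 : I.pts i0.succ = 1 := by
      rw [hr i0, ← hkdef, ← hmdef, hm0, hk0]; norm_num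
    have e1 : i0.castSucc = 0 := I.mono.injective (by rw [hl0, I.first])
    have e2 : i0.succ = Fin.last n := I.mono.injective (by rw [hr0, I.last])
    have v1 : (i0 : ℕ) = 0 := congrArg Fin.val e1
    have v2 : (i0 : ℕ) + 1 = n := congrArg Fin.val e2
    omega
  have hklt : k < 2^m := by have := hK i0; rw [← hkdef, ← hmdef] at this; exact this
  rcases Nat.even_or_odd k with he | ho
  · -- k even : sibling is the next interval
    have hkodd : Odd (k+1) := by rcases he with ⟨r, hr'⟩; rw [Nat.odd_iff]; omega
    have h2dvd : 2 ∣ 2^m := dvd_pow_self 2 (by omega)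
    have hklt1 : k + 1 < 2^m := by
      rcases he with ⟨r, hr'⟩; rcases h2dvd with ⟨c, hc⟩; omega
    have hrlt : I.pts i0.succ < I.pts (Fin.last n) := by
      rw [hr i0, I.last, ← hkdef, ← hmdef]
      rw [div_lt_one (by positivity)]
      have : ((k:ℚ) + 1) < 2^m := by exact_mod_cast hklt1
      calc ((k:ℚ)+1) < 2^m := this
        _ ≤ _ := le_refl _
    have hlt : i0.succ < Fin.last n := I.mono.lt_iff_lt.mp hrlt
    have hjlt : (i0 : ℕ) + 1 < n := by
      have := Fin.lt_def.mp hlt; simpa using this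
    set i1 : Fin n := ⟨(i0 : ℕ) + 1, by omega⟩ with hi1def
    have hcs : i1.castSucc = i0.succ := by
      apply Fin.ext; simp [hi1def]
    have heq : (K i1 : ℚ)/2^(M i1) = ((k+1 : ℕ) : ℚ)/2^m := by
      rw [← hl i1, hcs, hr i0, ← hkdef, ← hmdef]; push_cast; ring_nf
    obtain ⟨hmle, hKval⟩ := dyadic_odd hkodd heq.symm
    have hMeq : M i1 = m := le_antisymm (hi0 i1) hmle
    have hKeq : K i1 = k + 1 := by rw [hKval, hMeq]; simp
    obtain ⟨k', hk'⟩ := he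
    refine ⟨(i0 : ℕ), m, k', hjlt, hm1, by omega, ?_, ?_, ?_⟩
    · have : (⟨(i0:ℕ), by omega⟩ : Fin (n+1)) = i0.castSucc := by apply Fin.ext; simp
      rw [this, hl i0, ← hkdef, ← hmdef]
      congr 1
      rw [show k = 2*k' by omega]; push_cast; ring
    · have : (⟨(i0:ℕ)+1, by omega⟩ : Fin (n+1)) = i0.succ := by apply Fin.ext; simp
      rw [this, hr i0, ← hkdef, ← hmdef]
      congr 1
      rw [show k = 2*k' by omega]; push_cast; ring
    · have : (⟨(i0:ℕ)+2, by omega⟩ : Fin (n+1)) = i1.succ := by apply Fin.ext; simp [hi1def]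
      rw [this, hr i1, hMeq, hKeq]
      congr 1
      rw [show k + 1 = 2*k'+1 by omega]; push_cast; ring
  · -- k odd : sibling is the previous interval
    have hk1 : 1 ≤ k := by rcases ho with ⟨r, hr'⟩; omega
    have hlgt : I.pts 0 < I.pts i0.castSucc := by
      rw [hl i0, I.first, ← hkdef, ← hmdef]
      positivity
    have hlt : 0 < i0.castSucc := I.mono.lt_iff_lt.mp hlgt
    have hjpos : 1 ≤ (i0 : ℕ) := by
      have := Fin.lt_def.mp hlt; simp at this; omega
    set i1 : Fin n := ⟨(i0 : ℕ) - 1, by omega⟩ with hi1def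
    have hcs : i1.succ = i0.castSucc := by
      apply Fin.ext; simp [hi1def]; omega
    have heq : ((K i1 + 1 : ℕ) : ℚ)/2^(M i1) = ((k : ℕ) : ℚ)/2^m := by
      have := hr i1
      rw [hcs, hl i0, ← hkdef, ← hmdef] at this
      push_cast at this ⊢
      linarith [this]
    obtain ⟨hmle, hKval⟩ := dyadic_odd ho heq.symm
    have hMeq : M i1 = m := le_antisymm (hi0 i1) hmle
    have hKeq : K i1 + 1 = k := by rw [hKval, hMeq]; simp
    obtain ⟨k', hk'⟩ := ho
    refine ⟨(i0 : ℕ) - 1, m, k', by omega, hm1, by omega, ?_, ?_, ?_⟩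
    · have : (⟨(i0:ℕ)-1, by omega⟩ : Fin (n+1)) = i1.castSucc := by
        apply Fin.ext; simp [hi1def]
      rw [this, hl i1, hMeq]
      congr 1
      rw [show K i1 = 2*k' by omega]; push_cast; ring
    · have : (⟨(i0:ℕ)-1+1, by omega⟩ : Fin (n+1)) = i0.castSucc := by
        apply Fin.ext; simp; omega
      rw [this, hl i0, ← hkdef, ← hmdef]
      congr 1
      rw [show k = 2*k'+1 by omega]; push_cast; ring
    · have : (⟨(i0:ℕ)-1+2, by omega⟩ : Fin (n+1)) = i0.succ := by
        apply Fin.ext; simp; omega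
      rw [this, hr i0, ← hkdef, ← hmdef]
      congr 1
      rw [show k = 2*k'+1 by omega]; push_cast; ring

/-- Merging the two subintervals at positions `j` and `j+1` of a partition,
when their union is standard dyadic. -/
def mergeP {n : ℕ} (I : SDPartition (n+2)) (j : ℕ) (hj : j + 1 < n + 2)
    (hsd : IsSD (I.pts ⟨j, by omega⟩) (I.pts ⟨j+2, by omega⟩)) :
    SDPartition (n+1) where
  pts i := if (i : ℕ) ≤ j then I.pts ⟨i, by omega⟩ else I.pts ⟨(i : ℕ)+1, by omega⟩
  first := by
    show (if (0:ℕ) ≤ j then I.pts ⟨0, by omega⟩ else I.pts ⟨0+1, by omega⟩) = 0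
    rw [if_pos (by omega)]
    exact I.first
  last := by
    simp only [Fin.val_last]
    rw [if_neg (by omega)]
    have : (⟨n+1+1, by omega⟩ : Fin (n+2+1)) = Fin.last (n+2) := by apply Fin.ext; simp
    rw [this]; exact I.last
  mono := by
    intro a b hab
    have hab' : (a : ℕ) < (b : ℕ) := hab
    dsimp only
    rcases le_or_gt (a : ℕ) j with ha | ha <;> rcases le_or_gt (b : ℕ) j with hb | hb
    · rw [if_pos ha, if_pos hb]; exact I.mono (Fin.mk_lt_mk.mpr (by omega))
    · rw [if_pos ha, if_neg (by omega)]; exact I.mono (Fin.mk_lt_mk.mpr (by omega))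
    · omega
    · rw [if_neg (by omega), if_neg (by omega)]; exact I.mono (Fin.mk_lt_mk.mpr (by omega))
  sd := by
    intro i
    simp only [Fin.coe_castSucc, Fin.val_succ]
    rcases lt_trichotomy ((i : ℕ)) j with hi | hi | hi
    · rw [if_pos (by omega), if_pos (by omega)]
      have h := I.sd ⟨(i:ℕ), by omega⟩
      rw [Fin.castSucc_mk, Fin.succ_mk] at h
      exact h
    · rw [if_pos (by omega), if_neg (by omega)]
      have e1 : (⟨(i:ℕ), by omega⟩ : Fin (n+2+1)) = ⟨j, by omega⟩ := by
        apply Fin.ext; simp [hi]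
      have e2 : (⟨(i:ℕ)+1+1, by omega⟩ : Fin (n+2+1)) = ⟨j+2, by omega⟩ := by
        apply Fin.ext; simp [hi]
      rw [e1, e2]; exact hsd
    · rw [if_neg (by omega), if_neg (by omega)]
      have h := I.sd ⟨(i:ℕ)+1, by omega⟩
      rw [Fin.castSucc_mk, Fin.succ_mk] at h
      exact h

lemma dyadic_pair {m k m' k' : ℕ} (hodd : Odd k)
    (hl : (k:ℚ)/2^m = (k':ℚ)/2^m') (hr : ((k:ℚ)+1)/2^m = ((k':ℚ)+1)/2^m') :
    m' = m ∧ k' = k := by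
  obtain ⟨hmle, hkeq⟩ := dyadic_odd hodd hl
  have hr' : ((k+1:ℕ):ℚ)/2^m = ((k'+1:ℕ):ℚ)/2^m' := by push_cast; exact hr
  have hc : (k+1) * 2^m' = (k'+1) * 2^m := dyadic_cross hr'
  have hsplit : 2^m' = 2^(m'-m) * 2^m := by rw [← pow_add]; congr 1; omega
  rw [hsplit, hkeq, ← mul_assoc] at hc
  have hc2 : (k+1) * 2^(m'-m) = k * 2^(m'-m) + 1 :=
    Nat.eq_of_mul_eq_mul_right (Nat.two_pow_pos m) hc
  have hd : 2^(m'-m) = 1 := by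
    rw [add_mul, one_mul] at hc2; omega
  have hd0 : m' - m = 0 := by
    by_contra h
    have : 2 ≤ 2^(m'-m) := by
      calc 2 = 2^1 := (pow_one 2).symm
      _ ≤ 2^(m'-m) := Nat.pow_le_pow_right (by norm_num) (by omega)
    omega
  constructor
  · omega
  · rw [hkeq, hd0]; simp

lemma half_sd {m k : ℕ} (hm : 1 ≤ m) (hk : 2*k+1 < 2^m) :
    IsSD ((2*k : ℚ)/2^m) ((2*k+2 : ℚ)/2^m) := by
  have hp : (2:ℚ)^m = 2*2^(m-1) := by rw [← pow_succ']; congr 1; omega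
  have hpn : (2:ℕ)^m = 2*2^(m-1) := by rw [← pow_succ']; congr 1; omega
  refine ⟨m-1, k, by omega, ?_, ?_⟩
  · rw [hp, mul_div_mul_left _ _ (two_ne_zero)]
  · rw [hp, show (2*(k:ℚ)+2) = 2*((k:ℚ)+1) from by ring,
      mul_div_mul_left _ _ (two_ne_zero)]

lemma left_L {m k : ℕ} (hm : 1 ≤ m) (hk : 2*k+1 < 2^m) :
    IsLeftSD ((2*k : ℚ)/2^m) ((2*k+1 : ℚ)/2^m) := by
  refine ⟨m, 2*k, hm, by omega, even_two_mul k, by push_cast; ring_nf, by push_cast; ring_nf⟩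

lemma right_R {m k : ℕ} (hm : 1 ≤ m) (hk : 2*k+1 < 2^m) :
    IsRightSD ((2*k+1 : ℚ)/2^m) ((2*k+2 : ℚ)/2^m) := by
  refine Or.inr ⟨m, 2*k+1, hm, by omega, ⟨k, by omega⟩, by push_cast; ring_nf, by push_cast; ring_nf⟩

lemma not_left_R {m k : ℕ} (hm : 1 ≤ m) (hk : 2*k+1 < 2^m) :
    ¬ IsLeftSD ((2*k+1 : ℚ)/2^m) ((2*k+2 : ℚ)/2^m) := by
  rintro ⟨m', k', hm', hk', hke, hl', hr'⟩
  have hodd : Odd (2*k+1) := ⟨k, by omega⟩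
  have hl2 : ((2*k+1:ℕ):ℚ)/2^m = (k':ℚ)/2^m' := by push_cast; exact_mod_cast hl'
  have hr2 : (((2*k+1:ℕ):ℚ)+1)/2^m = ((k':ℚ)+1)/2^m' := by
    push_cast
    rw [show (2*(k:ℚ)+1+1) = (2*(k:ℚ)+2) by ring]
    exact_mod_cast hr'
  obtain ⟨_, hkk⟩ := dyadic_pair hodd hl2 hr2
  rw [hkk] at hke
  rcases hke with ⟨r, hr3⟩
  omega

lemma SIn_finite {n : ℕ} (I : SDPartition n) : (SIn I).Finite := by
  apply Set.Finite.subset ((Set.finite_range I.pts).prod (Set.finite_range I.pts))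
  rintro A ⟨⟨p, q, hpq, rfl⟩, -⟩
  exact ⟨⟨p, rfl⟩, ⟨q, rfl⟩⟩

lemma one_div_pow_le {m m' : ℕ} (h : m ≤ m') : (1:ℚ)/2^m' ≤ 1/2^m := by
  apply one_div_le_one_div_of_le (by positivity)
  exact pow_le_pow_right₀ (by norm_num) h

lemma mergeP_pts {n : ℕ} (I : SDPartition (n+2)) (j : ℕ) (hj : j + 1 < n + 2)
    (hsd : IsSD (I.pts ⟨j, by omega⟩) (I.pts ⟨j+2, by omega⟩)) (i : Fin (n+2)) :
    (mergeP I j hj hsd).pts i =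
      if (i : ℕ) ≤ j then I.pts ⟨i, by omega⟩ else I.pts ⟨(i:ℕ)+1, by omega⟩ := rfl

lemma isSD_L {m k : ℕ} (hk : 2*k+1 < 2^m) : IsSD ((2*k : ℚ)/2^m) ((2*k+1 : ℚ)/2^m) :=
  ⟨m, 2*k, by omega, by push_cast; ring_nf, by push_cast; ring_nf⟩

lemma isSD_R {m k : ℕ} (hk : 2*k+1 < 2^m) : IsSD ((2*k+1 : ℚ)/2^m) ((2*k+2 : ℚ)/2^m) :=
  ⟨m, 2*k+1, by omega, by push_cast; ring_nf, by push_cast; ring_nf⟩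

lemma SIn_merge {n : ℕ} (I : SDPartition (n+2)) (j m k : ℕ) (hj : j + 1 < n + 2)
    (hm : 1 ≤ m) (hk : 2*k+1 < 2^m)
    (h0 : I.pts ⟨j, by omega⟩ = (2*k : ℚ)/2^m)
    (h1 : I.pts ⟨j+1, by omega⟩ = (2*k+1 : ℚ)/2^m)
    (h2 : I.pts ⟨j+2, by omega⟩ = (2*k+2 : ℚ)/2^m)
    (hsd : IsSD (I.pts ⟨j, by omega⟩) (I.pts ⟨j+2, by omega⟩)) :
    SIn I = insert ((2*k : ℚ)/2^m, (2*k+1 : ℚ)/2^m)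
      (insert ((2*k+1 : ℚ)/2^m, (2*k+2 : ℚ)/2^m) (SIn (mergeP I j hj hsd))) := by
  have h2m : (0:ℚ) < 2^m := by positivity
  ext A
  simp only [Set.mem_insert_iff]
  constructor
  · rintro ⟨⟨p, q, hpq, rfl⟩, hAsd⟩
    obtain ⟨m', k', hk', hl', hr'⟩ := hAsd
    dsimp only at hl' hr'
    have hv := Fin.lt_def.mp hpq
    by_cases hq : (q : ℕ) = j + 1
    · -- A = L
      left
      have hqe : q = ⟨j+1, by omega⟩ := Fin.ext hq
      rw [hqe, h1] at hr'
      have heq : ((2*k+1:ℕ):ℚ)/2^m = ((k'+1:ℕ):ℚ)/2^m' := by push_cast; linarith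
      obtain ⟨hmle, -⟩ := dyadic_odd ⟨k, by omega⟩ heq
      have hle := one_div_pow_le hmle
      have hplo : I.pts ⟨j, by omega⟩ ≤ I.pts p := by
        rw [h0, hl']
        have e1 : (k':ℚ)/2^m' = ((k':ℚ)+1)/2^m' - 1/2^m' := by ring
        rw [e1, ← hr']
        rw [show (2*k:ℚ)/2^m = (2*k+1:ℚ)/2^m - 1/2^m from by ring]
        linarith
      have hphi : I.pts p ≤ I.pts ⟨j, by omega⟩ := by
        apply I.mono.monotone
        exact Fin.le_def.mpr (show (p:ℕ) ≤ j by omega)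
      have hpe : I.pts p = (2*k:ℚ)/2^m := by rw [← h0]; exact le_antisymm hphi hplo
      rw [hpe, hqe, h1]
    · by_cases hp : (p : ℕ) = j + 1
      · -- A = R
        right; left
        have hpe : p = ⟨j+1, by omega⟩ := Fin.ext hp
        rw [hpe, h1] at hl'
        have heq : ((2*k+1:ℕ):ℚ)/2^m = ((k':ℕ):ℚ)/2^m' := by push_cast; linarith
        obtain ⟨hmle, -⟩ := dyadic_odd ⟨k, by omega⟩ heq
        have hle := one_div_pow_le hmle
        have hqhi : I.pts q ≤ I.pts ⟨j+2, by omega⟩ := by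
          rw [h2, hr']
          have e1 : ((k':ℚ)+1)/2^m' = (k':ℚ)/2^m' + 1/2^m' := by ring
          rw [e1, ← hl']
          rw [show (2*k+2:ℚ)/2^m = (2*k+1:ℚ)/2^m + 1/2^m from by ring]
          linarith
        have hqlo : I.pts ⟨j+2, by omega⟩ ≤ I.pts q := by
          apply I.mono.monotone
          exact Fin.le_def.mpr (show j+2 ≤ (q:ℕ) by omega)
        have hqe : I.pts q = (2*k+2:ℚ)/2^m := by rw [← h2]; exact le_antisymm hqhi hqlo
        rw [hqe, hpe, h1]
      · -- A ∈ SIn (mergeP ...)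
        right; right
        have hple : (p:ℕ) < n + 3 := p.isLt
        have hqle : (q:ℕ) < n + 3 := q.isLt
        have key : ∀ (a : ℕ) (ha : a < n + 3), a ≠ j + 1 →
            ∃ b : Fin (n+2), (mergeP I j hj hsd).pts b = I.pts ⟨a, ha⟩ ∧ (b:ℕ) = (if a ≤ j then a else a - 1) := by
          intro a ha hne
          by_cases haj : a ≤ j
          · refine ⟨⟨a, by omega⟩, ?_, by simp [haj]⟩
            rw [mergeP_pts]
            rw [if_pos (by simpa using haj)]
          · refine ⟨⟨a - 1, by omega⟩, ?_, by simp [haj]⟩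
            rw [mergeP_pts]
            rw [if_neg (by simp; omega)]
            congr 1
            apply Fin.ext
            simp
            omega
        obtain ⟨b1, hb1, hb1v⟩ := key (p:ℕ) (by omega) hp
        obtain ⟨b2, hb2, hb2v⟩ := key (q:ℕ) (by omega) hq
        refine ⟨⟨b1, b2, ?_, ?_⟩, ⟨m', k', hk', hl', hr'⟩⟩
        · rw [Fin.lt_def, hb1v, hb2v]; split_ifs <;> omega
        · have ep : (⟨(p:ℕ), by omega⟩ : Fin (n+2+1)) = p := Fin.ext rfl
          have eq' : (⟨(q:ℕ), by omega⟩ : Fin (n+2+1)) = q := Fin.ext rfl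
          rw [hb1, hb2, ep, eq']
  · rintro (hA | hA | hA)
    · refine ⟨⟨⟨j, by omega⟩, ⟨j+1, by omega⟩, Fin.mk_lt_mk.mpr (by omega),
        by rw [hA, h0, h1]⟩, ?_⟩
      rw [hA]; exact isSD_L hk
    · refine ⟨⟨⟨j+1, by omega⟩, ⟨j+2, by omega⟩, Fin.mk_lt_mk.mpr (by omega),
        by rw [hA, h1, h2]⟩, ?_⟩
      rw [hA]; exact isSD_R hk
    · obtain ⟨⟨p, q, hpq, hAe⟩, hAsd⟩ := hA
      have hv := Fin.lt_def.mp hpq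
      refine ⟨⟨⟨if (p:ℕ) ≤ j then (p:ℕ) else (p:ℕ)+1, by split <;> omega⟩,
               ⟨if (q:ℕ) ≤ j then (q:ℕ) else (q:ℕ)+1, by split <;> omega⟩,
               by rw [Fin.mk_lt_mk]; split_ifs <;> omega, ?_⟩, hAsd⟩
      rw [hAe]
      simp only [Prod.mk.injEq]
      constructor
      · rw [mergeP_pts]
        split_ifs <;> first | rfl | omega
      · rw [mergeP_pts]
        split_ifs <;> first | rfl | omega

lemma conjSD_pos {A : ℚ × ℚ} (h : IsLeftSD A.1 A.2) : conjSD A = (A.2, 2*A.2-A.1) := by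
  unfold conjSD; rw [if_pos h]

lemma conjSD_neg {A : ℚ × ℚ} (h : ¬ IsLeftSD A.1 A.2) : conjSD A = (2*A.1-A.2, A.1) := by
  unfold conjSD; rw [if_neg h]

lemma signs_LR {m k : ℕ} (hm : 1 ≤ m) (hk : 2*k+1 < 2^m) (s : ℚ × ℚ → ℤ) (hs : SignSpec s) :
    s ((2*k : ℚ)/2^m, (2*k+1 : ℚ)/2^m) = s ((2*k : ℚ)/2^m, (2*k+2 : ℚ)/2^m) ∧
    s ((2*k+1 : ℚ)/2^m, (2*k+2 : ℚ)/2^m) = - s ((2*k : ℚ)/2^m, (2*k+2 : ℚ)/2^m) := by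
  have h2m : (0:ℚ) < 2^m := by positivity
  have hkQ : (2*(k:ℚ)+1) < 2^m := by exact_mod_cast hk
  have hknn : (0:ℚ) ≤ 2*(k:ℚ) := by positivity
  set L : ℚ × ℚ := ((2*k : ℚ)/2^m, (2*k+1 : ℚ)/2^m) with hL
  set R : ℚ × ℚ := ((2*k+1 : ℚ)/2^m, (2*k+2 : ℚ)/2^m) with hR
  have hLne : L ≠ ((0:ℚ),(1:ℚ)) := by
    intro h
    have h2 := congrArg Prod.snd h
    simp only [hL] at h2
    rw [div_eq_one_iff_eq (by positivity)] at h2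
    linarith
  have hRne : R ≠ ((0:ℚ),(1:ℚ)) := by
    intro h
    have h2 := congrArg Prod.fst h
    simp only [hR] at h2
    have : (0:ℚ) < (2*k+1)/2^m := by positivity
    rw [h2] at this
    exact lt_irrefl 0 this
  have hcL : conjSD L = R := by
    rw [conjSD_pos (left_L hm hk)]
    simp only [hL, hR, Prod.mk.injEq]
    refine ⟨?_, ?_⟩ <;> first | trivial | ring
  have hcR : conjSD R = ((2*k : ℚ)/2^m, (2*k+1 : ℚ)/2^m) := by
    rw [conjSD_neg (not_left_R hm hk)]
    simp only [hR, Prod.mk.injEq]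
    refine ⟨?_, ?_⟩ <;> first | trivial | ring
  have hjoinL : sdJoin L (conjSD L) = ((2*k : ℚ)/2^m, (2*k+2 : ℚ)/2^m) := by
    rw [hcL]
    unfold sdJoin
    simp only [hL, hR]
    rw [min_eq_left (by gcongr <;> linarith), max_eq_right (by gcongr <;> linarith)]
  have hjoinR : sdJoin R (conjSD R) = ((2*k : ℚ)/2^m, (2*k+2 : ℚ)/2^m) := by
    rw [hcR]
    unfold sdJoin
    simp only [hR]
    rw [min_eq_right (by gcongr <;> linarith), max_eq_left (by gcongr <;> linarith)]
  obtain ⟨hv, h01, hrec⟩ := hs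
  constructor
  · have := (hrec L (isSD_L hk) hLne).1 (left_L hm hk)
    rw [hjoinL] at this
    exact this
  · have := (hrec R (isSD_R hk) hRne).2 (right_R hm hk)
    rw [hjoinR] at this
    exact this

lemma mergeP_pts_ne {n : ℕ} (I : SDPartition (n+2)) (j : ℕ) (hj : j + 1 < n + 2)
    (hsd : IsSD (I.pts ⟨j, by omega⟩) (I.pts ⟨j+2, by omega⟩)) (i : Fin (n+2)) :
    (mergeP I j hj hsd).pts i ≠ I.pts ⟨j+1, by omega⟩ := by
  rw [mergeP_pts]
  split_ifs with h
  · intro he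
    have := I.mono.injective he
    have := congrArg Fin.val this
    simp at this
    omega
  · intro he
    have := I.mono.injective he
    have := congrArg Fin.val this
    simp at this
    have : (i:ℕ) < n + 2 := i.isLt
    omega

lemma L_notmem {n : ℕ} (I : SDPartition (n+2)) (j m k : ℕ) (hj : j + 1 < n + 2)
    (h1 : I.pts ⟨j+1, by omega⟩ = (2*k+1 : ℚ)/2^m)
    (hsd : IsSD (I.pts ⟨j, by omega⟩) (I.pts ⟨j+2, by omega⟩)) :
    ((2*k : ℚ)/2^m, (2*k+1 : ℚ)/2^m) ∉ SIn (mergeP I j hj hsd) := by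
  rintro ⟨⟨p, q, hpq, hAe⟩, -⟩
  have h2 := congrArg Prod.snd hAe
  simp only at h2
  exact mergeP_pts_ne I j hj hsd q (by rw [← h2, h1])

lemma R_notmem {n : ℕ} (I : SDPartition (n+2)) (j m k : ℕ) (hj : j + 1 < n + 2)
    (h1 : I.pts ⟨j+1, by omega⟩ = (2*k+1 : ℚ)/2^m)
    (hsd : IsSD (I.pts ⟨j, by omega⟩) (I.pts ⟨j+2, by omega⟩)) :
    ((2*k+1 : ℚ)/2^m, (2*k+2 : ℚ)/2^m) ∉ SIn (mergeP I j hj hsd) := by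
  rintro ⟨⟨p, q, hpq, hAe⟩, -⟩
  have h2 := congrArg Prod.fst hAe
  simp only at h2
  exact mergeP_pts_ne I j hj hsd p (by rw [← h2, h1])

lemma LR_ne {m k : ℕ} :
    ((2*k : ℚ)/2^m, (2*k+1 : ℚ)/2^m) ≠ ((2*k+1 : ℚ)/2^m, (2*k+2 : ℚ)/2^m) := by
  intro h
  have h2 := congrArg Prod.fst h
  simp only at h2
  have h2m : (0:ℚ) < 2^m := by positivity
  rw [div_eq_div_iff (by positivity) (by positivity)] at h2
  nlinarith [h2m]

lemma statement_aux (s : ℚ × ℚ → ℤ) (hs : SignSpec s) :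
    ∀ (n : ℕ) (I : SDPartition n),
      ({A ∈ SIn I | s A = 1}).ncard = n ∧ ({A ∈ SIn I | s A = -1}).ncard = n - 1 := by
  intro n
  induction n with
  | zero =>
    intro I
    exfalso
    have h0 := I.first
    have h1 := I.last
    rw [show Fin.last 0 = 0 from rfl, h0] at h1
    norm_num at h1
  | succ n ih =>
    intro I
    match n, ih with
    | 0, _ =>
      -- base case : the partition is just [0,1]
      have hS : SIn I = {((0:ℚ),(1:ℚ))} := by
        ext A
        constructor
        · rintro ⟨⟨p, q, hpq, rfl⟩, -⟩
          have hv := Fin.lt_def.mp hpq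
          have hp2 : (p:ℕ) < 2 := p.isLt
          have hq2 : (q:ℕ) < 2 := q.isLt
          have hpe : p = 0 := by apply Fin.ext; simp only [Fin.val_zero]; omega
          have hqe : q = Fin.last 1 := by apply Fin.ext; simp only [Fin.val_last]; omega
          rw [hpe, hqe, I.first, I.last]
          rfl
        · rintro rfl
          exact ⟨⟨0, Fin.last 1, by rw [Fin.lt_def]; norm_num, by rw [I.first, I.last]⟩,
            ⟨0, 0, by norm_num, by norm_num, by norm_num⟩⟩
      constructor
      · rw [hS]
        have : {A ∈ ({((0:ℚ),(1:ℚ))} : Set (ℚ × ℚ)) | s A = 1} = {((0:ℚ),(1:ℚ))} := by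
          ext A
          simp only [Set.mem_sep_iff, Set.mem_singleton_iff]
          constructor
          · rintro ⟨h, -⟩; exact h
          · rintro rfl; exact ⟨rfl, hs.2.1⟩
        rw [this, Set.ncard_singleton]
      · rw [hS]
        have : {A ∈ ({((0:ℚ),(1:ℚ))} : Set (ℚ × ℚ)) | s A = -1} = ∅ := by
          ext A
          simp only [Set.mem_setOf_eq, Set.mem_sep_iff, Set.mem_singleton_iff,
            Set.mem_empty_iff_false, iff_false, not_and]
          rintro rfl h
          rw [hs.2.1] at h
          norm_num at h
        rw [this, Set.ncard_empty]
    | (n+1), ih =>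
      -- inductive step
      obtain ⟨j, m, k, hj, hm, hk, h0, h1, h2⟩ := exists_sibling (by omega) I
      have hsd : IsSD (I.pts ⟨j, by omega⟩) (I.pts ⟨j+2, by omega⟩) := by
        rw [h0, h2]; exact half_sd hm hk
      set I' := mergeP I j hj hsd with hI'
      set L : ℚ × ℚ := ((2*k : ℚ)/2^m, (2*k+1 : ℚ)/2^m) with hLdef
      set R : ℚ × ℚ := ((2*k+1 : ℚ)/2^m, (2*k+2 : ℚ)/2^m) with hRdef
      have hmerge := SIn_merge I j m k hj hm hk h0 h1 h2 hsd
      obtain ⟨ihp, ihm⟩ := ih I'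
      have hfin : (SIn I').Finite := SIn_finite I'
      have hLnm : L ∉ SIn I' := L_notmem I j m k hj h1 hsd
      have hRnm : R ∉ SIn I' := R_notmem I j m k hj h1 hsd
      have hLR : L ≠ R := LR_ne
      obtain ⟨hsL, hsR⟩ := signs_LR hm hk s hs
      have hJv : s ((2*k : ℚ)/2^m, (2*k+2 : ℚ)/2^m) = 1 ∨
          s ((2*k : ℚ)/2^m, (2*k+2 : ℚ)/2^m) = -1 := hs.1 _ (half_sd hm hk)
      have hfinp : ({A ∈ SIn I' | s A = 1}).Finite := hfin.subset (fun x hx => hx.1)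
      have hfinm : ({A ∈ SIn I' | s A = -1}).Finite := hfin.subset (fun x hx => hx.1)
      have hLnp : L ∉ {A ∈ SIn I' | s A = 1} := fun h => hLnm h.1
      have hLnn : L ∉ {A ∈ SIn I' | s A = -1} := fun h => hLnm h.1
      have hRnp : R ∉ {A ∈ SIn I' | s A = 1} := fun h => hRnm h.1
      have hRnn : R ∉ {A ∈ SIn I' | s A = -1} := fun h => hRnm h.1
      rcases hJv with hJ | hJ
      · -- s L = 1, s R = -1
        rw [hJ] at hsL hsR
        have ep : {A ∈ SIn I | s A = 1} = insert L {A ∈ SIn I' | s A = 1} := by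
          rw [hmerge]
          ext B
          simp only [Set.mem_sep_iff, Set.mem_insert_iff]
          constructor
          · rintro ⟨(rfl | rfl | hB), hsB⟩
            · exact Or.inl rfl
            · exfalso; rw [hsR] at hsB; norm_num at hsB
            · exact Or.inr ⟨hB, hsB⟩
          · rintro (rfl | ⟨hB, hsB⟩)
            · exact ⟨Or.inl rfl, hsL⟩
            · exact ⟨Or.inr (Or.inr hB), hsB⟩
        have en : {A ∈ SIn I | s A = -1} = insert R {A ∈ SIn I' | s A = -1} := by
          rw [hmerge]
          ext B
          simp only [Set.mem_sep_iff, Set.mem_insert_iff]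
          constructor
          · rintro ⟨(rfl | rfl | hB), hsB⟩
            · exfalso; rw [hsL] at hsB; norm_num at hsB
            · exact Or.inl rfl
            · exact Or.inr ⟨hB, hsB⟩
          · rintro (rfl | ⟨hB, hsB⟩)
            · exact ⟨Or.inr (Or.inl rfl), hsR⟩
            · exact ⟨Or.inr (Or.inr hB), hsB⟩
        constructor
        · rw [ep, Set.ncard_insert_of_notMem hLnp hfinp, ihp]
        · rw [en, Set.ncard_insert_of_notMem hRnn hfinm, ihm]; omega
      · -- s L = -1, s R = 1
        rw [hJ] at hsL hsR
        norm_num at hsR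
        have ep : {A ∈ SIn I | s A = 1} = insert R {A ∈ SIn I' | s A = 1} := by
          rw [hmerge]
          ext B
          simp only [Set.mem_sep_iff, Set.mem_insert_iff]
          constructor
          · rintro ⟨(rfl | rfl | hB), hsB⟩
            · exfalso; rw [hsL] at hsB; norm_num at hsB
            · exact Or.inl rfl
            · exact Or.inr ⟨hB, hsB⟩
          · rintro (rfl | ⟨hB, hsB⟩)
            · exact ⟨Or.inr (Or.inl rfl), hsR⟩
            · exact ⟨Or.inr (Or.inr hB), hsB⟩
        have en : {A ∈ SIn I | s A = -1} = insert L {A ∈ SIn I' | s A = -1} := by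
          rw [hmerge]
          ext B
          simp only [Set.mem_sep_iff, Set.mem_insert_iff]
          constructor
          · rintro ⟨(rfl | rfl | hB), hsB⟩
            · exact Or.inl rfl
            · exfalso; rw [hsR] at hsB; norm_num at hsB
            · exact Or.inr ⟨hB, hsB⟩
          · rintro (rfl | ⟨hB, hsB⟩)
            · exact ⟨Or.inl rfl, hsL⟩
            · exact ⟨Or.inr (Or.inr hB), hsB⟩
        constructor
        · rw [ep, Set.ncard_insert_of_notMem hRnp hfinp, ihp]
        · rw [en, Set.ncard_insert_of_notMem hLnn hfinm, ihm]; omega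

/-- for a standard dyadic `n`-partition `I`, `|S_+(I)| = n` and
`|S_-(I)| = n - 1`. -/
theorem statement_10 {n : ℕ} (I : SDPartition n) (s : ℚ × ℚ → ℤ)
    (hs : SignSpec s) :
    ({A ∈ SIn I | s A = 1}).ncard = n ∧ ({A ∈ SIn I | s A = -1}).ncard = n - 1 := by
  exact statement_aux s hs n I
end
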